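/- Let M = (m_i)_{i=0}^∞ be a sequence of integers with m_0 = 1 and m_i ≥ 2 for all i ≥ 1, and let r ≥ 2. Let M^{(r)} denote the shifted sequence (1, m_{r+1}, m_{r+2}, …) and F_r(q) := Σ_{n≥0} p_{M^{(r)}}(n) q^n its generating function. Then in ℤ⟦q⟧: Σ_{n≥1} p_M(m_1 m_2 ⋯ m_r n − 1) q^n = H_{(m_2, m_3, …, m_r)}(q) · F_r(q). -/

import Mathlib

/-- `pM m n` = number of partitions of `n` into parts of the form `m 0 * m 1 * ⋯ * m r`. -/
noncomputable def pM (m : ℕ → ℕ) (n : ℕ) : ℕ :=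
  Nat.card {p : n.Partition // ∀ j ∈ p.parts, ∃ r : ℕ, j = ∏ i ∈ Finset.range (r + 1), m i}

/-- Generating function of `pM`. -/
noncomputable def FM (m : ℕ → ℕ) : PowerSeries ℤ := PowerSeries.mk fun n => (pM m n : ℤ)

/-- The operator `U_m` on `ℤ⟦q⟧`, sending `∑ a(n) qⁿ` to `∑ a(m·n) qⁿ`. -/
noncomputable def U (m : ℕ) (f : PowerSeries ℤ) : PowerSeries ℤ :=
  PowerSeries.mk fun n => PowerSeries.coeff (m * n) f

/-- Auxiliary: the series `H` defined by recursion on a reversed index list. -/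
noncomputable def HserRev : List ℕ → PowerSeries ℤ
  | [] => PowerSeries.X * PowerSeries.invUnitsSub (1 : ℤˣ)
  | mhead :: rest => U mhead (PowerSeries.invUnitsSub (1 : ℤˣ) * HserRev rest)

/-- `Hser [m₁, …, m_k] = H_{(m₁,…,m_k)}`: one has `Hser [] = H_∅ = q/(1-q)` and
`H_{(m₁,…,m_k)} = U_{m_k}((1/(1-q)) · H_{(m₁,…,m_{k-1})})`. -/
noncomputable def Hser (l : List ℕ) : PowerSeries ℤ := HserRev l.reverse

/-! ### Auxiliary material -/

open Finset PowerSeries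

/-- Shift of the base sequence by `k`. -/
def shf (k : ℕ) (m : ℕ → ℕ) : ℕ → ℕ := fun i => if i = 0 then 1 else m (k + i)

/-- `j` is an admissible part for the sequence `m`. -/
def IsM (m : ℕ → ℕ) (j : ℕ) : Prop := ∃ r : ℕ, j = ∏ i ∈ Finset.range (r + 1), m i

lemma isM_one (m : ℕ → ℕ) (hm0 : m 0 = 1) : IsM m 1 := ⟨0, by simp [hm0]⟩

lemma shf_shf (k : ℕ) (m : ℕ → ℕ) : shf 1 (shf k m) = shf (k+1) m := by
  funext i
  cases i with
  | zero => rfl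
  | succ i => simp [shf, Nat.add_comm, Nat.add_assoc, Nat.add_left_comm]

lemma isM_div (m : ℕ → ℕ) (hm0 : m 0 = 1) (hm1 : 0 < m 1) {j : ℕ} (hj : IsM m j)
    (hj1 : j ≠ 1) : m 1 ∣ j ∧ IsM (shf 1 m) (j / m 1) := by
  obtain ⟨r, rfl⟩ := hj
  cases r with
  | zero => simp [hm0] at hj1
  | succ s =>
    have h1 : ∏ i ∈ range (s + 1 + 1), m i = m 1 * ∏ i ∈ range s, m (i + 2) := by
      rw [Finset.prod_range_succ' (fun i => m i) (s+1), hm0, mul_one,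
        Finset.prod_range_succ' (fun i => m (i + 1)) s]
      rw [mul_comm]
    have h2 : ∏ i ∈ range (s + 1), shf 1 m i = ∏ i ∈ range s, m (i + 2) := by
      rw [Finset.prod_range_succ' (fun i => shf 1 m i) s]
      simp only [shf, Nat.succ_ne_zero, if_false, if_true, mul_one]
      exact Finset.prod_congr rfl fun x _ => by rw [Nat.add_comm 1 (x+1)]
    constructor
    · exact h1 ▸ Dvd.intro _ rfl
    · exact ⟨s, by rw [h1, Nat.mul_div_cancel_left _ hm1, h2]⟩

lemma isM_mul (m : ℕ → ℕ) (hm0 : m 0 = 1) {t : ℕ} (ht : IsM (shf 1 m) t) :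
    IsM m (m 1 * t) := by
  obtain ⟨r, rfl⟩ := ht
  refine ⟨r + 1, ?_⟩
  rw [Finset.prod_range_succ' (fun i => m i) (r+1), hm0, mul_one,
    Finset.prod_range_succ' (fun i => m (i + 1)) r,
    Finset.prod_range_succ' (fun i => shf 1 m i) r]
  simp only [shf, Nat.succ_ne_zero, if_false, if_true, mul_one]
  rw [mul_comm]
  congr 1
  exact Finset.prod_congr rfl fun x _ => by rw [Nat.add_comm 1 (x+1)]

lemma pM_eq (m : ℕ → ℕ) (n : ℕ) :
    pM m n = Nat.card {p : n.Partition // ∀ j ∈ p.parts, IsM m j} := rfl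

lemma pM_zero (m : ℕ → ℕ) : pM m 0 = 1 := by
  rw [pM_eq]
  have hparts : ∀ p : Nat.Partition 0, p.parts = 0 := fun p =>
    Multiset.eq_zero_of_forall_notMem fun j hj =>
      (p.parts_pos hj).ne' (Multiset.sum_eq_zero_iff.1 p.parts_sum j hj)
  haveI : Unique {p : Nat.Partition 0 // ∀ j ∈ p.parts, IsM m j} :=
    { default := ⟨default, fun j hj => by simp [hparts] at hj⟩
      uniq := fun x => Subtype.ext (Subsingleton.elim _ _) }
  exact Nat.card_unique

lemma pM_rec (m : ℕ → ℕ) (hm0 : m 0 = 1) (hm : ∀ i, 1 ≤ i → 2 ≤ m i) {n : ℕ} (hn : n ≠ 0) :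
    pM m n = pM m (n - 1) + (if m 1 ∣ n then pM (shf 1 m) (n / m 1) else 0) := by
  classical
  have hm1 : 0 < m 1 := by have := hm 1 le_rfl; omega
  have hm1' : 2 ≤ m 1 := hm 1 le_rfl
  -- split the count according to whether 1 is a part
  have hsplit : pM m n
      = Nat.card {p : n.Partition // (∀ j ∈ p.parts, IsM m j) ∧ 1 ∈ p.parts}
      + Nat.card {p : n.Partition // (∀ j ∈ p.parts, IsM m j) ∧ 1 ∉ p.parts} := by
    rw [pM_eq, ← Nat.card_congr (Equiv.sumCompl
      (fun x : {p : n.Partition // ∀ j ∈ p.parts, IsM m j} => 1 ∈ x.1.parts)),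
      Nat.card_sum]
    congr 1
    · exact Nat.card_congr (Equiv.subtypeSubtypeEquivSubtypeInter
        (fun p : n.Partition => ∀ j ∈ p.parts, IsM m j) (fun p => 1 ∈ p.parts))
    · exact Nat.card_congr (Equiv.subtypeSubtypeEquivSubtypeInter
        (fun p : n.Partition => ∀ j ∈ p.parts, IsM m j) (fun p => 1 ∉ p.parts))
  -- partitions containing a part 1 ≃ partitions of n - 1
  have eA : {p : n.Partition // (∀ j ∈ p.parts, IsM m j) ∧ 1 ∈ p.parts}
      ≃ {p : (n-1).Partition // ∀ j ∈ p.parts, IsM m j} := by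
    refine
      { toFun := fun p => ⟨⟨p.1.parts.erase 1,
          fun hi => p.1.parts_pos (Multiset.mem_of_mem_erase hi), ?_⟩,
          fun j hj => p.2.1 j (Multiset.mem_of_mem_erase hj)⟩
        invFun := fun q => ⟨⟨(1 : ℕ) ::ₘ q.1.parts, ?_, ?_⟩, ?_, Multiset.mem_cons_self _ _⟩
        left_inv := ?_
        right_inv := ?_ }
    · have hc : (1 : ℕ) ::ₘ p.1.parts.erase 1 = p.1.parts := Multiset.cons_erase p.2.2
      have hs : 1 + (p.1.parts.erase 1).sum = n := by
        rw [← Multiset.sum_cons, hc, p.1.parts_sum]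
      omega
    · intro i hi
      rcases Multiset.mem_cons.1 hi with rfl | h
      · exact one_pos
      · exact q.1.parts_pos h
    · rw [Multiset.sum_cons, q.1.parts_sum]; omega
    · intro j hj
      rcases Multiset.mem_cons.1 hj with rfl | h
      · exact isM_one m hm0
      · exact q.2 j h
    · intro p
      apply Subtype.ext; apply Nat.Partition.ext
      exact Multiset.cons_erase p.2.2
    · intro q
      apply Subtype.ext; apply Nat.Partition.ext
      exact Multiset.erase_cons_head _ _
  rw [hsplit, Nat.card_congr eA, ← pM_eq]
  congr 1
  by_cases hd : m 1 ∣ n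
  · rw [if_pos hd]
    have eB : {p : n.Partition // (∀ j ∈ p.parts, IsM m j) ∧ 1 ∉ p.parts}
        ≃ {p : (n / m 1).Partition // ∀ j ∈ p.parts, IsM (shf 1 m) j} := by
      have key : ∀ p : {p : n.Partition // (∀ j ∈ p.parts, IsM m j) ∧ 1 ∉ p.parts},
          ∀ j ∈ p.1.parts, m 1 ∣ j ∧ IsM (shf 1 m) (j / m 1) := fun p j hj =>
        isM_div m hm0 hm1 (p.2.1 j hj) (fun h => p.2.2 (h ▸ hj))
      refine
        { toFun := fun p => ⟨⟨p.1.parts.map (· / m 1), ?_, ?_⟩, ?_⟩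
          invFun := fun q => ⟨⟨q.1.parts.map (fun t => m 1 * t), ?_, ?_⟩, ?_, ?_⟩
          left_inv := ?_
          right_inv := ?_ }
      · intro i hi
        obtain ⟨j, hj, rfl⟩ := Multiset.mem_map.1 hi
        exact Nat.div_pos (Nat.le_of_dvd (p.1.parts_pos hj) (key p j hj).1) hm1
      · have h1 : (p.1.parts.map (fun j => m 1 * (j / m 1))).sum = n := by
          rw [Multiset.map_congr rfl (fun j hj => Nat.mul_div_cancel' (key p j hj).1)]
          simp [p.1.parts_sum]
        have h2 : (p.1.parts.map (fun j => m 1 * (j / m 1))).sum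
            = m 1 * (p.1.parts.map (· / m 1)).sum := by
          rw [Multiset.sum_map_mul_left]
        rw [h2] at h1
        exact (Nat.div_eq_of_eq_mul_right hm1 h1.symm).symm
      · intro j hj
        obtain ⟨x, hx, rfl⟩ := Multiset.mem_map.1 hj
        exact (key p x hx).2
      · intro i hi
        obtain ⟨t, ht, rfl⟩ := Multiset.mem_map.1 hi
        exact Nat.mul_pos hm1 (q.1.parts_pos ht)
      · have : (q.1.parts.map (fun t => m 1 * t)).sum = m 1 * q.1.parts.sum := by
          rw [Multiset.sum_map_mul_left]; simp
        rw [this, q.1.parts_sum, Nat.mul_div_cancel' hd]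
      · intro j hj
        obtain ⟨t, ht, rfl⟩ := Multiset.mem_map.1 hj
        exact isM_mul m hm0 (q.2 t ht)
      · intro h1
        obtain ⟨t, ht, h⟩ := Multiset.mem_map.1 h1
        have h2 := q.1.parts_pos ht
        have h3 : 2 * 1 ≤ m 1 * t := Nat.mul_le_mul hm1' h2
        omega
      · intro p
        apply Subtype.ext; apply Nat.Partition.ext
        simp only [Multiset.map_map, Function.comp]
        rw [Multiset.map_congr rfl (fun j hj => Nat.mul_div_cancel' (key p j hj).1)]
        simp
      · intro q
        apply Subtype.ext; apply Nat.Partition.ext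
        simp only [Multiset.map_map, Function.comp]
        rw [Multiset.map_congr rfl (fun t ht => Nat.mul_div_cancel_left t hm1)]
        simp
    rw [Nat.card_congr eB, ← pM_eq]
  · rw [if_neg hd]
    have : IsEmpty {p : n.Partition // (∀ j ∈ p.parts, IsM m j) ∧ 1 ∉ p.parts} := by
      refine ⟨fun p => hd ?_⟩
      have : m 1 ∣ p.1.parts.sum := Multiset.dvd_sum fun j hj =>
        (isM_div m hm0 hm1 (p.2.1 j hj) (fun h => p.2.2 (h ▸ hj))).1
      rwa [p.1.parts_sum] at this
    simp [Nat.card_of_isEmpty]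

/-! ### Power series lemmas -/

/-- Substitution `q ↦ q^a` on coefficients. -/
noncomputable def Expand (a : ℕ) (f : PowerSeries ℤ) : PowerSeries ℤ :=
  PowerSeries.mk fun n => if a ∣ n then PowerSeries.coeff (n / a) f else 0

lemma coeff_U (m n : ℕ) (f : PowerSeries ℤ) :
    PowerSeries.coeff n (U m f) = PowerSeries.coeff (m * n) f := coeff_mk _ _

lemma coeff_X_mul' (n : ℕ) (f : PowerSeries ℤ) :
    PowerSeries.coeff n (X * f) = if n = 0 then 0 else PowerSeries.coeff (n - 1) f := by
  cases n with
  | zero => rw [mul_comm]; simp [PowerSeries.coeff_zero_mul_X]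
  | succ k => simp [PowerSeries.coeff_succ_X_mul]

lemma U_mul_Expand (a : ℕ) (ha : a ≠ 0) (f g : PowerSeries ℤ) :
    U a (f * Expand a g) = U a f * g := by
  ext n
  rw [coeff_U, PowerSeries.coeff_mul, PowerSeries.coeff_mul]
  have h1 : ∀ p ∈ antidiagonal (a * n),
      PowerSeries.coeff p.1 f * PowerSeries.coeff p.2 (Expand a g)
      = if a ∣ p.2 then PowerSeries.coeff p.1 f * PowerSeries.coeff (p.2 / a) g else 0 := by
    intro p _
    rw [Expand, coeff_mk, mul_ite, mul_zero]
  rw [Finset.sum_congr rfl h1, ← Finset.sum_filter]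
  have hpos : 0 < a := Nat.pos_of_ne_zero ha
  have key : ∀ p ∈ (antidiagonal (a * n)).filter (fun p : ℕ × ℕ => a ∣ p.2),
      a ∣ p.1 ∧ a ∣ p.2 ∧ p.1 / a + p.2 / a = n := by
    intro p hp
    rw [Finset.mem_filter, Finset.HasAntidiagonal.mem_antidiagonal] at hp
    obtain ⟨hsum, c, hc⟩ := hp
    have hcn : c ≤ n := by
      by_contra hlt
      have : a * n < a * c := (Nat.mul_lt_mul_left hpos).2 (by omega)
      omega
    have hp1 : p.1 = a * (n - c) := by rw [Nat.mul_sub a n c] <;> omega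
    refine ⟨⟨n - c, hp1⟩, ⟨c, hc⟩, ?_⟩
    rw [hp1, hc, Nat.mul_div_cancel_left _ hpos, Nat.mul_div_cancel_left _ hpos]
    omega
  refine Finset.sum_nbij' (i := fun p : ℕ × ℕ => (p.1 / a, p.2 / a))
    (j := fun p : ℕ × ℕ => (a * p.1, a * p.2)) ?_ ?_ ?_ ?_ ?_
  · intro p hp
    rw [Finset.HasAntidiagonal.mem_antidiagonal]
    exact (key p hp).2.2
  · intro p hp
    rw [Finset.HasAntidiagonal.mem_antidiagonal] at hp
    rw [Finset.mem_filter, Finset.HasAntidiagonal.mem_antidiagonal]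
    exact ⟨by rw [← Nat.mul_add, hp], Dvd.intro _ rfl⟩
  · intro p hp
    obtain ⟨h1', h2', -⟩ := key p hp
    have e1 : a * (p.1 / a) = p.1 := Nat.mul_div_cancel' h1'
    have e2 : a * (p.2 / a) = p.2 := Nat.mul_div_cancel' h2'
    ext <;> simp [e1, e2]
  · intro p _
    have e1 : a * p.1 / a = p.1 := Nat.mul_div_cancel_left _ hpos
    have e2 : a * p.2 / a = p.2 := Nat.mul_div_cancel_left _ hpos
    ext <;> simp [e1, e2]
  · intro p hp
    obtain ⟨h1', -, -⟩ := key p hp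
    rw [coeff_U, Nat.mul_div_cancel' h1']

lemma oneSubX_mul_FM (m : ℕ → ℕ) (hm0 : m 0 = 1) (hm : ∀ i, 1 ≤ i → 2 ≤ m i) :
    (1 - X) * FM m = Expand (m 1) (FM (shf 1 m)) := by
  ext n
  rw [sub_mul, one_mul, map_sub, coeff_X_mul']
  rw [Expand, coeff_mk, FM, FM, coeff_mk]
  cases n with
  | zero =>
    simp [pM_zero]
  | succ k =>
    have hrec := pM_rec m hm0 hm (n := k + 1) (Nat.succ_ne_zero k)
    rw [coeff_mk, if_neg (Nat.succ_ne_zero k)]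
    simp only [Nat.add_sub_cancel]
    rw [hrec]
    push_cast
    split <;> simp

lemma invUnitsSub_one_mul_oneSubX :
    (invUnitsSub (1 : ℤˣ)) * (1 - X) = 1 := by
  have := PowerSeries.invUnitsSub_mul_sub (R := ℤ) 1
  simpa using this

lemma FM_eq (m : ℕ → ℕ) (hm0 : m 0 = 1) (hm : ∀ i, 1 ≤ i → 2 ≤ m i) :
    FM m = invUnitsSub (1 : ℤˣ) * Expand (m 1) (FM (shf 1 m)) := by
  rw [← oneSubX_mul_FM m hm0 hm, ← mul_assoc, invUnitsSub_one_mul_oneSubX, one_mul]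

lemma U_X_invUnitsSub (a : ℕ) (ha : a ≠ 0) :
    U a (X * invUnitsSub (1 : ℤˣ)) = X * invUnitsSub (1 : ℤˣ) := by
  ext n
  rw [U, coeff_mk, coeff_X_mul', coeff_X_mul']
  have hiff : a * n = 0 ↔ n = 0 := by
    constructor
    · intro h; rcases Nat.mul_eq_zero.1 h with h | h
      · exact absurd h ha
      · exact h
    · intro h; rw [h, Nat.mul_zero]
  split
  · rw [if_pos (hiff.1 (by assumption))]
  · rw [if_neg (fun h => by simp [h] at *), coeff_invUnitsSub, coeff_invUnitsSub]
    simp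

lemma sort_Icc_succ (k : ℕ) (hk : 1 ≤ k) :
    (Finset.Icc 2 (k+1)).sort (· ≤ ·) = (Finset.Icc 2 k).sort (· ≤ ·) ++ [k+1] := by
  refine (fun hp h1 h2 => List.Perm.eq_of_pairwise (le := (· ≤ ·)) (fun a b _ _ => le_antisymm) h1 h2 hp) ?_ ?_ ?_
  · rw [← Multiset.coe_eq_coe]
    have h1 : ((Finset.Icc 2 (k+1)).sort (· ≤ ·) : Multiset ℕ) = (Finset.Icc 2 (k+1)).1 :=
      Finset.sort_eq _ _
    have h2 : ((Finset.Icc 2 k).sort (· ≤ ·) : Multiset ℕ) = (Finset.Icc 2 k).1 :=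
      Finset.sort_eq _ _
    have hins : Finset.Icc 2 (k+1) = insert (k+1) (Finset.Icc 2 k) := by
      exact (Finset.insert_Icc_right_eq_Icc_add_one (by omega)).symm
    have hnotmem : (k+1) ∉ Finset.Icc 2 k := by simp
    calc ((Finset.Icc 2 (k+1)).sort (· ≤ ·) : Multiset ℕ)
        = (Finset.Icc 2 (k+1)).1 := h1
      _ = (k+1) ::ₘ (Finset.Icc 2 k).1 := by rw [hins, Finset.insert_val_of_notMem hnotmem]
      _ = ((Finset.Icc 2 k).sort (· ≤ ·) : Multiset ℕ) + {k+1} := by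
          rw [h2, ← Multiset.singleton_add, add_comm]
      _ = ↑((Finset.Icc 2 k).sort (· ≤ ·) ++ [k+1]) := by
          rw [← Multiset.coe_singleton, ← Multiset.coe_add]
  · exact Finset.pairwise_sort _ _
  · rw [List.pairwise_append]
    refine ⟨Finset.pairwise_sort _ _, List.pairwise_singleton _ _, ?_⟩
    intro x hx y hy
    rw [List.mem_singleton] at hy
    have := (Finset.mem_sort (α := ℕ) (· ≤ ·)).1 hx
    rw [Finset.mem_Icc] at this
    omega

/-! ### Main induction -/

lemma main_ind (m : ℕ → ℕ) (hm0 : m 0 = 1) (hm : ∀ i, 1 ≤ i → 2 ≤ m i) :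
    ∀ k : ℕ, 1 ≤ k →
    (PowerSeries.mk fun n =>
        if n = 0 then 0 else (pM m ((∏ t ∈ Finset.Icc 1 k, m t) * n - 1) : ℤ)) =
      HserRev ((((Finset.Icc 2 k).sort (· ≤ ·)).map m).reverse) * FM (shf k m) := by
  intro k hk
  induction k, hk using Nat.le_induction with
  | base =>
    have hlist : (((Finset.Icc 2 1).sort (· ≤ ·)).map m).reverse = ([] : List ℕ) := by
      rw [Finset.Icc_eq_empty (by omega), Finset.sort_empty]
      simp
    rw [hlist]
    have hprod : ∏ t ∈ Finset.Icc 1 1, m t = m 1 := by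
      rw [Finset.Icc_self, Finset.prod_singleton]
    have hm1 : m 1 ≠ 0 := by have := hm 1 le_rfl; omega
    have key : (PowerSeries.mk fun n =>
        if n = 0 then 0 else (pM m ((∏ t ∈ Finset.Icc 1 1, m t) * n - 1) : ℤ))
        = U (m 1) (X * FM m) := by
      ext n
      rw [coeff_mk, coeff_U, coeff_X_mul', hprod]
      have hiff : m 1 * n = 0 ↔ n = 0 := by
        constructor
        · intro h; rcases Nat.mul_eq_zero.1 h with h | h
          · exact absurd h hm1
          · exact h
        · intro h; rw [h, Nat.mul_zero]
      by_cases hn : n = 0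
      · rw [if_pos hn, if_pos (hiff.2 hn)]
      · rw [if_neg hn, if_neg (fun h => hn (hiff.1 h)), FM, coeff_mk]
    rw [key, FM_eq m hm0 hm, ← mul_assoc, U_mul_Expand _ hm1, U_X_invUnitsSub _ hm1]
    rfl
  | succ k hk ih =>
    have ha2 : 2 ≤ m (k+1) := hm (k+1) (by omega)
    have ha0 : m (k+1) ≠ 0 := by omega
    have hprod : ∏ t ∈ Finset.Icc 1 (k+1), m t = (∏ t ∈ Finset.Icc 1 k, m t) * m (k+1) :=
      Finset.prod_Icc_succ_top (by omega) _
    -- shifted-sequence hypotheses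
    have hs0 : shf k m 0 = 1 := by simp [shf]
    have hs : ∀ i, 1 ≤ i → 2 ≤ shf k m i := by
      intro i hi
      have : i ≠ 0 := by omega
      simp only [shf, this, if_false]
      exact hm (k + i) (by omega)
    have hs1 : shf k m 1 = m (k+1) := by simp [shf]
    -- step: the new LHS is U (m (k+1)) of the old one
    have step : (PowerSeries.mk fun n =>
        if n = 0 then 0 else (pM m ((∏ t ∈ Finset.Icc 1 (k+1), m t) * n - 1) : ℤ))
        = U (m (k+1)) (PowerSeries.mk fun n =>
            if n = 0 then 0 else (pM m ((∏ t ∈ Finset.Icc 1 k, m t) * n - 1) : ℤ)) := by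
      ext n
      rw [coeff_mk, coeff_U, coeff_mk]
      have hiff : m (k+1) * n = 0 ↔ n = 0 := by
        constructor
        · intro h; rcases Nat.mul_eq_zero.1 h with h | h
          · exact absurd h ha0
          · exact h
        · intro h; rw [h, Nat.mul_zero]
      by_cases hn : n = 0
      · rw [if_pos hn, if_pos (hiff.2 hn)]
      · rw [if_neg hn, if_neg (fun h => hn (hiff.1 h)), hprod]
        ring_nf
    -- list manipulation
    have hlist : (((Finset.Icc 2 (k+1)).sort (· ≤ ·)).map m).reverse
        = m (k+1) :: (((Finset.Icc 2 k).sort (· ≤ ·)).map m).reverse := by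
      rw [sort_Icc_succ k hk, List.map_append, List.reverse_append]
      simp
    rw [step, ih, hlist]
    have hFM := FM_eq (shf k m) hs0 hs
    rw [hs1, shf_shf] at hFM
    rw [hFM]
    have : HserRev ((((Finset.Icc 2 k).sort (· ≤ ·)).map m).reverse) *
        (invUnitsSub (1 : ℤˣ) * Expand (m (k+1)) (FM (shf (k+1) m)))
        = (invUnitsSub (1 : ℤˣ) * HserRev ((((Finset.Icc 2 k).sort (· ≤ ·)).map m).reverse)) *
          Expand (m (k+1)) (FM (shf (k+1) m)) := by ring
    rw [this, U_mul_Expand _ ha0]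
    rfl

/-- Key identity: `∑_{n≥1} p_M(m₁ ⋯ m_r n - 1) qⁿ = H_{(m₂,…,m_r)}(q) · F_r(q)`, where
`F_r` is the generating function of the partition function of the shifted sequence
`(1, m_{r+1}, m_{r+2}, …)`. -/
theorem genFun_eq_H_mul_F (m : ℕ → ℕ) (hm0 : m 0 = 1) (hm : ∀ i, 1 ≤ i → 2 ≤ m i)
    (r : ℕ) (hr : 2 ≤ r) :
    (PowerSeries.mk fun n =>
        if n = 0 then 0 else (pM m ((∏ t ∈ Finset.Icc 1 r, m t) * n - 1) : ℤ)) =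
      Hser (((Finset.Icc 2 r).sort (· ≤ ·)).map m) *
        FM (fun i => if i = 0 then 1 else m (r + i)) := by
  exact main_ind m hm0 hm r (by omega)
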